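/- For every integer n ≥ 1, det((s_{i+j})_{1 ≤ i,j ≤ n}) = D_n · (p;q)_{n+1} · √q / ((1−p)·(q;q)_n), where D_n = det((s_{i+j})_{0 ≤ i,j ≤ n}). -/

import Mathlib

/-- Finite q-shifted factorial `(z;q)_n`. -/
noncomputable def qp (z q : ℝ) (n : ℕ) : ℝ := ∏ k ∈ Finset.range n, (1 - z * q ^ k)

/-- Generalized Stieltjes–Wigert moments `s_n = (p;q)_n q^{-(n+1)²/2}`. -/
noncomputable def sw (p q : ℝ) (n : ℕ) : ℝ := qp p q n * q ^ (-(((n : ℝ) + 1) ^ 2) / 2)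

/-- Hankel determinant `D_n = det (s_{i+j})_{0 ≤ i,j ≤ n}`. -/
noncomputable def hD (p q : ℝ) (n : ℕ) : ℝ :=
  (Matrix.of fun i j : Fin (n + 1) => sw p q ((i : ℕ) + (j : ℕ))).det

noncomputable def W (q : ℝ) (k : ℕ) : ℝ := q ^ (-(((k : ℝ)) ^ 2 + 2 * (k : ℝ)) / 2)

noncomputable def Z (q : ℝ) (k : ℕ) : ℝ := q ^ (-(k : ℤ))

lemma qp_add (p q : ℝ) (a b : ℕ) :
    qp p q (a + b) = qp p q a * ∏ l ∈ Finset.range b, (1 - p * q ^ (a + l)) := by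
  rw [qp, Finset.prod_range_add]; rfl

lemma Zmul (q : ℝ) (hq : q ≠ 0) (s b : ℕ) : Z q s * q ^ (s + b) = q ^ b := by
  rw [Z, ← zpow_natCast q (s + b), ← zpow_add₀ hq]
  have : (-(s : ℤ)) + ((s + b : ℕ) : ℤ) = (b : ℤ) := by push_cast; ring
  rw [this, zpow_natCast]

open Polynomial in
lemma key (p q : ℝ) (hq : q ≠ 0) (t m : ℕ) :
    (Matrix.of fun i j : Fin m =>
        qp p q ((i : ℕ) + (j : ℕ) + 2 * t) * Z q ((i : ℕ) + t) ^ ((j : ℕ) + t)).det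
      = (∏ i : Fin m, qp p q ((i : ℕ) + 2 * t) * Z q ((i : ℕ) + t) ^ t)
        * ∏ i : Fin m, ∏ j ∈ Finset.Ioi i, (Z q ((j : ℕ) + t) - Z q ((i : ℕ) + t)) := by
  classical
  set P : Fin m → Polynomial ℝ :=
    fun j => ∏ l ∈ Finset.range (j : ℕ), (X - C (p * q ^ (t + l))) with hP
  have hmonic : ∀ j, (P j).Monic := fun j =>
    monic_prod_of_monic _ _ fun l _ => monic_X_sub_C _
  have hdeg : ∀ j : Fin m, (P j).natDegree = (j : ℕ) := by
    intro j
    rw [hP, natDegree_prod_of_monic _ _ fun l _ => monic_X_sub_C _,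
      Finset.sum_congr rfl fun l _ => natDegree_X_sub_C _]
    simp
  have entry : ∀ i j : Fin m,
      qp p q ((i : ℕ) + (j : ℕ) + 2 * t) * Z q ((i : ℕ) + t) ^ ((j : ℕ) + t)
        = (qp p q ((i : ℕ) + 2 * t) * Z q ((i : ℕ) + t) ^ t)
          * (P j).eval (Z q ((i : ℕ) + t)) := by
    intro i j
    have heval : (P j).eval (Z q ((i : ℕ) + t))
        = Z q ((i : ℕ) + t) ^ (j : ℕ)
          * ∏ l ∈ Finset.range (j : ℕ), (1 - p * q ^ ((i : ℕ) + 2 * t + l)) := by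
      rw [hP, eval_prod]
      have : ∀ l ∈ Finset.range (j : ℕ),
          (X - C (p * q ^ (t + l))).eval (Z q ((i : ℕ) + t))
            = Z q ((i : ℕ) + t) * (1 - p * q ^ ((i : ℕ) + 2 * t + l)) := by
        intro l _
        have h1 : (i : ℕ) + 2 * t + l = ((i : ℕ) + t) + (t + l) := by ring
        rw [eval_sub, eval_X, eval_C, h1]
        linear_combination p * Zmul q hq ((i : ℕ) + t) (t + l)
      rw [Finset.prod_congr rfl this, Finset.prod_mul_distrib, Finset.prod_const,
        Finset.card_range]
    rw [heval, show (i : ℕ) + (j : ℕ) + 2 * t = ((i : ℕ) + 2 * t) + (j : ℕ) by ring,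
      qp_add, pow_add]
    ring
  have hM : (Matrix.of fun i j : Fin m =>
        qp p q ((i : ℕ) + (j : ℕ) + 2 * t) * Z q ((i : ℕ) + t) ^ ((j : ℕ) + t))
      = Matrix.of fun i j : Fin m =>
          (qp p q ((i : ℕ) + 2 * t) * Z q ((i : ℕ) + t) ^ t)
            * (Matrix.of fun i j : Fin m => (P j).eval (Z q ((i : ℕ) + t))) i j := by
    ext i j
    exact entry i j
  rw [hM, Matrix.det_mul_column]
  congr 1
  rw [← Matrix.det_eval_matrixOfPolynomials_eq_det_vandermonde
    (fun i : Fin m => Z q ((i : ℕ) + t)) P hdeg hmonic]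
  rw [Matrix.det_vandermonde]

lemma sw_entry (p q : ℝ) (hq : 0 < q) (s u : ℕ) :
    sw p q (s + u)
      = (q ^ (-(1 : ℝ) / 2) * W q s) * (W q u * (qp p q (s + u) * Z q s ^ u)) := by
  rw [sw, W, W, Z]
  have h1 : (q ^ (-(s : ℤ))) ^ u = q ^ ((((-(s : ℤ)) * (u : ℕ) : ℤ) : ℝ)) := by
    rw [← zpow_natCast (q ^ (-(s : ℤ))) u, ← zpow_mul, Real.rpow_intCast]
  have h2 : (-((((s + u : ℕ) : ℝ)) + 1) ^ 2) / 2
      = (-(1 : ℝ) / 2) + ((-(((s : ℝ)) ^ 2 + 2 * (s : ℝ)) / 2)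
        + ((-(((u : ℝ)) ^ 2 + 2 * (u : ℝ)) / 2) + (((-(s : ℤ)) * (u : ℕ) : ℤ) : ℝ))) := by
    push_cast; ring
  rw [h1, h2, Real.rpow_add hq, Real.rpow_add hq, Real.rpow_add hq]
  ring

lemma det_sw (p q : ℝ) (hq : 0 < q) (t m : ℕ) :
    (Matrix.of fun i j : Fin m => sw p q (((i : ℕ) + t) + ((j : ℕ) + t))).det
      = (q ^ (-(1 : ℝ) / 2)) ^ m * (∏ i : Fin m, W q ((i : ℕ) + t)) ^ 2
        * ((∏ i : Fin m, qp p q ((i : ℕ) + 2 * t) * Z q ((i : ℕ) + t) ^ t)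
           * ∏ i : Fin m, ∏ j ∈ Finset.Ioi i, (Z q ((j : ℕ) + t) - Z q ((i : ℕ) + t))) := by
  have e1 : (Matrix.of fun i j : Fin m => sw p q (((i : ℕ) + t) + ((j : ℕ) + t)))
      = Matrix.of fun i j : Fin m =>
          (q ^ (-(1 : ℝ) / 2) * W q ((i : ℕ) + t)) *
            (Matrix.of fun i j : Fin m => W q ((j : ℕ) + t) *
              (Matrix.of fun i j : Fin m =>
                qp p q ((i : ℕ) + (j : ℕ) + 2 * t) * Z q ((i : ℕ) + t) ^ ((j : ℕ) + t)) i j) i j := by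
    ext i j
    simp only [Matrix.of_apply]
    rw [sw_entry p q hq]
    rw [show ((i : ℕ) + t) + ((j : ℕ) + t) = (i : ℕ) + (j : ℕ) + 2 * t by ring]
  rw [e1, Matrix.det_mul_column, Matrix.det_mul_row, key p q (ne_of_gt hq) t m]
  rw [Finset.prod_mul_distrib, Finset.prod_const, Finset.card_univ, Fintype.card_fin]
  ring

lemma W_zero (q : ℝ) : W q 0 = 1 := by
  rw [W]; norm_num

lemma Z_zero (q : ℝ) : Z q 0 = 1 := by
  rw [Z]; norm_num

lemma qp_zero (p q : ℝ) : qp p q 0 = 1 := by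
  rw [qp]; simp

lemma qp_one (p q : ℝ) : qp p q 1 = 1 - p := by
  rw [qp]; simp

lemma prod_qp_shift (p q : ℝ) (n : ℕ) :
    (∏ i : Fin (n + 1), qp p q (i : ℕ)) * qp p q (n + 1)
      = (1 - p) * ∏ i : Fin n, qp p q ((i : ℕ) + 2) := by
  rw [Fin.prod_univ_eq_prod_range (fun k => qp p q k) (n + 1),
    Fin.prod_univ_eq_prod_range (fun k => qp p q (k + 2)) n]
  calc (∏ k ∈ Finset.range (n + 1), qp p q k) * qp p q (n + 1)
      = ∏ k ∈ Finset.range (n + 2), qp p q k := (Finset.prod_range_succ _ _).symm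
    _ = (∏ k ∈ Finset.range (n + 1), qp p q (k + 1)) * qp p q 0 :=
        Finset.prod_range_succ' _ _
    _ = ((∏ k ∈ Finset.range n, qp p q (k + 1 + 1)) * qp p q (0 + 1)) * qp p q 0 := by
        rw [Finset.prod_range_succ' (fun k => qp p q (k + 1)) n]
    _ = (1 - p) * ∏ k ∈ Finset.range n, qp p q (k + 2) := by
        simp only [qp_zero, qp_one, mul_one, zero_add]
        rw [mul_comm]

lemma vand_split {n : ℕ} (v : Fin (n + 1) → ℝ) :
    (∏ i : Fin (n + 1), ∏ j ∈ Finset.Ioi i, (v j - v i))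
      = (∏ j : Fin n, (v j.succ - v 0))
        * ∏ i : Fin n, ∏ j ∈ Finset.Ioi i, (v j.succ - v i.succ) := by
  rw [Fin.prod_univ_succ]
  congr 1
  · exact Fin.prod_Ioi_zero _
  · exact Finset.prod_congr rfl fun i _ => Fin.prod_Ioi_succ _ i

lemma prod_Z (q : ℝ) (hq : q ≠ 0) (n : ℕ) :
    (∏ i : Fin n, (Z q ((i : ℕ) + 1) - 1))
      = qp q q n * ∏ i : Fin n, Z q ((i : ℕ) + 1) := by
  rw [qp, ← Fin.prod_univ_eq_prod_range (fun k => 1 - q * q ^ k) n, ← Finset.prod_mul_distrib]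
  refine Finset.prod_congr rfl fun i _ => ?_
  rw [Z, sub_mul, one_mul]
  congr 1
  have h1 : q * q ^ (i : ℕ) = q ^ ((((i : ℕ) + 1 : ℕ)) : ℤ) := by
    rw [zpow_natCast, pow_succ]; ring
  rw [h1, ← zpow_add₀ hq]
  have h2 : ((((i : ℕ) + 1 : ℕ)) : ℤ) + -((((i : ℕ) + 1 : ℕ)) : ℤ) = 0 := by ring
  rw [h2, zpow_zero]

lemma c0_sqrt (q : ℝ) (hq : 0 < q) : q ^ (-(1 : ℝ) / 2) * Real.sqrt q = 1 := by
  rw [Real.sqrt_eq_rpow, ← Real.rpow_add hq]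
  norm_num

theorem stmt_7 (p q : ℝ) (hp0 : 0 ≤ p) (hp1 : p < 1) (hq0 : 0 < q) (hq1 : q < 1)
    (n : ℕ) (hn : 1 ≤ n) :
    (Matrix.of fun i j : Fin n => sw p q (((i : ℕ) + 1) + ((j : ℕ) + 1))).det
      = hD p q n * qp p q (n + 1) * Real.sqrt q / ((1 - p) * qp q q n) := by
  have hqne : q ≠ 0 := ne_of_gt hq0
  have h1p : (0 : ℝ) < 1 - p := by linarith
  have hqqpos : 0 < qp q q n := by
    rw [qp]
    refine Finset.prod_pos fun k _ => ?_
    have hk : q ^ k ≤ 1 := pow_le_one₀ (le_of_lt hq0) (le_of_lt hq1)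
    nlinarith
  have hL := det_sw p q hq0 1 n
  have hH := det_sw p q hq0 0 (n + 1)
  simp only [mul_one, pow_one, mul_zero, add_zero, pow_zero] at hL hH
  have hHD : hD p q n
      = (q ^ (-(1 : ℝ) / 2)) ^ (n + 1) * (∏ i : Fin (n + 1), W q (i : ℕ)) ^ 2
        * ((∏ i : Fin (n + 1), qp p q (i : ℕ))
           * ∏ i : Fin (n + 1), ∏ j ∈ Finset.Ioi i, (Z q (j : ℕ) - Z q (i : ℕ))) := by
    rw [hD]; exact hH
  have hW : (∏ i : Fin (n + 1), W q (i : ℕ)) = ∏ i : Fin n, W q ((i : ℕ) + 1) := by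
    rw [Fin.prod_univ_succ]
    simp [W_zero, Fin.val_succ]
  have hV : (∏ i : Fin (n + 1), ∏ j ∈ Finset.Ioi i, (Z q (j : ℕ) - Z q (i : ℕ)))
      = (∏ j : Fin n, (Z q ((j : ℕ) + 1) - 1))
        * ∏ i : Fin n, ∏ j ∈ Finset.Ioi i, (Z q ((j : ℕ) + 1) - Z q ((i : ℕ) + 1)) := by
    have h := vand_split (fun i : Fin (n + 1) => Z q (i : ℕ))
    simp only [Fin.val_succ, Fin.val_zero, Z_zero] at h
    exact h
  have hsplit : (∏ i : Fin n, qp p q ((i : ℕ) + 2) * Z q ((i : ℕ) + 1))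
      = (∏ i : Fin n, qp p q ((i : ℕ) + 2)) * ∏ i : Fin n, Z q ((i : ℕ) + 1) :=
    Finset.prod_mul_distrib
  have hc : (q ^ (-(1 : ℝ) / 2)) ^ (n + 1) * Real.sqrt q = (q ^ (-(1 : ℝ) / 2)) ^ n := by
    rw [pow_succ, mul_assoc, c0_sqrt q hq0, mul_one]
  rw [hL, hHD, eq_div_iff (ne_of_gt (mul_pos h1p hqqpos)), hW, hV, prod_Z q hqne n, hsplit]
  linear_combination
    (-((q ^ (-(1 : ℝ) / 2)) ^ n * (∏ i : Fin n, W q ((i : ℕ) + 1)) ^ 2 * qp q q n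
        * (∏ i : Fin n, Z q ((i : ℕ) + 1))
        * ∏ i : Fin n, ∏ j ∈ Finset.Ioi i, (Z q ((j : ℕ) + 1) - Z q ((i : ℕ) + 1))))
      * prod_qp_shift p q n
    + (-((∏ i : Fin (n + 1), qp p q (i : ℕ)) * qp p q (n + 1)
        * (∏ i : Fin n, W q ((i : ℕ) + 1)) ^ 2 * qp q q n
        * (∏ i : Fin n, Z q ((i : ℕ) + 1))
        * ∏ i : Fin n, ∏ j ∈ Finset.Ioi i, (Z q ((j : ℕ) + 1) - Z q ((i : ℕ) + 1))))
      * hc
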